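/- Let a, b : Primes → ℝ be functions on the prime numbers with |a_p| ≤ 2 and |b_p| ≤ 2 for every prime p. Suppose that, as s → 1⁺, Σ_p (a_p² − 1) p^{−s} = O(1), Σ_p (b_p² − 1) p^{−s} = O(1), Σ_p (a_p⁴ − 3 a_p² + 1) p^{−s} = O(1), Σ_p (b_p⁴ − 3 b_p² + 1) p^{−s} = O(1), and Σ_p a_p² b_p² p^{−s} − Σ_p p^{−s} = O(1). Then liminf_{s→1⁺} (Σ_{p : a_p² < b_p²} p^{−s}) / (Σ_p p^{−s}) ≥ 1/16; that is, the set {p : a_p² < b_p²} has analytic density at least 1/16. -/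
import Mathlib


open Filter Topology Asymptotics

lemma aux_wsum {ι : Type*} {q : ι → ℝ} (hq0 : ∀ p, 0 ≤ q p) (hq : Summable q)
    {w : ι → ℝ} {C : ℝ} (hw : ∀ p, |w p| ≤ C) :
    Summable (fun p => w p * q p) := by
  apply Summable.of_abs
  apply Summable.of_nonneg_of_le (fun p => abs_nonneg _) _ (hq.mul_left C)
  intro p
  rw [abs_mul, abs_of_nonneg (hq0 p)]
  exact mul_le_mul_of_nonneg_right (hw p) (hq0 p)

lemma aux_key (a b : Nat.Primes → ℝ) (q : Nat.Primes → ℝ)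
    (hq0 : ∀ p, 0 ≤ q p) (hq : Summable q)
    (ha4 : ∀ p, a p ^ 2 ≤ 4) (hb4 : ∀ p, b p ^ 2 ≤ 4)
    {C1 C2 C3 C4 C5 : ℝ}
    (e1 : |∑' p : Nat.Primes, (a p ^ 2 - 1) * q p| ≤ C1)
    (e2 : |∑' p : Nat.Primes, (b p ^ 2 - 1) * q p| ≤ C2)
    (e3 : |∑' p : Nat.Primes, (a p ^ 4 - 3 * a p ^ 2 + 1) * q p| ≤ C3)
    (e4 : |∑' p : Nat.Primes, (b p ^ 4 - 3 * b p ^ 2 + 1) * q p| ≤ C4)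
    (e5 : |(∑' p : Nat.Primes, a p ^ 2 * b p ^ 2 * q p) - ∑' p : Nat.Primes, q p| ≤ C5) :
    2 * (∑' p : Nat.Primes, q p) - (C3 + C4 + 2 * C5 + C1 + 7 * C2) ≤
      32 * ∑' p : {p : Nat.Primes // a p ^ 2 < b p ^ 2}, q p.1 := by
  have ha0 : ∀ p, (0:ℝ) ≤ a p ^ 2 := fun p => sq_nonneg _
  have hb0 : ∀ p, (0:ℝ) ≤ b p ^ 2 := fun p => sq_nonneg _
  have ha16 : ∀ p, a p ^ 4 ≤ 16 := fun p => by nlinarith [ha4 p, ha0 p]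
  have hb16 : ∀ p, b p ^ 4 ≤ 16 := fun p => by nlinarith [hb4 p, hb0 p]
  have S1 : Summable (fun p => (a p ^ 2 - 1) * q p) :=
    aux_wsum hq0 hq (C := 5) (fun p => by rw [abs_le]; constructor <;> [linarith [ha0 p]; linarith [ha4 p]])
  have S2 : Summable (fun p => (b p ^ 2 - 1) * q p) :=
    aux_wsum hq0 hq (C := 5) (fun p => by rw [abs_le]; constructor <;> [linarith [hb0 p]; linarith [hb4 p]])
  have S3 : Summable (fun p => (a p ^ 4 - 3 * a p ^ 2 + 1) * q p) :=
    aux_wsum hq0 hq (C := 30) (fun p => by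
      rw [abs_le]
      constructor
      · nlinarith [ha4 p, ha0 p]
      · nlinarith [ha16 p, ha0 p])
  have S4 : Summable (fun p => (b p ^ 4 - 3 * b p ^ 2 + 1) * q p) :=
    aux_wsum hq0 hq (C := 30) (fun p => by
      rw [abs_le]
      constructor
      · nlinarith [hb4 p, hb0 p]
      · nlinarith [hb16 p, hb0 p])
  have S5 : Summable (fun p => a p ^ 2 * b p ^ 2 * q p) :=
    aux_wsum hq0 hq (C := 16) (fun p => by
      rw [abs_le]
      constructor
      · nlinarith [ha0 p, hb0 p]
      · nlinarith [ha4 p, hb4 p, ha0 p, hb0 p])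
  have SC : Summable (fun p =>
      ((b p ^ 2 - a p ^ 2) ^ 2 + 4 * (b p ^ 2 - a p ^ 2)) * q p) :=
    aux_wsum hq0 hq (C := 100) (fun p => by
      rw [abs_le]
      constructor
      · nlinarith [ha4 p, hb4 p, ha0 p, hb0 p, sq_nonneg (b p ^ 2 - a p ^ 2)]
      · nlinarith [ha4 p, hb4 p, ha0 p, hb0 p, sq_nonneg (b p ^ 2 - a p ^ 2),
          sq_nonneg (b p ^ 2 + a p ^ 2)])
  -- the algebraic expansion of the key sum
  have expand : ∑' p : Nat.Primes,
      ((b p ^ 2 - a p ^ 2) ^ 2 + 4 * (b p ^ 2 - a p ^ 2)) * q p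
      = (∑' p : Nat.Primes, (a p ^ 4 - 3 * a p ^ 2 + 1) * q p)
        + (∑' p : Nat.Primes, (b p ^ 4 - 3 * b p ^ 2 + 1) * q p)
        + (-2) * (∑' p : Nat.Primes, a p ^ 2 * b p ^ 2 * q p)
        + (-1) * (∑' p : Nat.Primes, (a p ^ 2 - 1) * q p)
        + 7 * (∑' p : Nat.Primes, (b p ^ 2 - 1) * q p)
        + 4 * (∑' p : Nat.Primes, q p) := by
    rw [← tsum_mul_left, ← tsum_mul_left, ← tsum_mul_left, ← tsum_mul_left,
      ← Summable.tsum_add S3 S4, ← Summable.tsum_add (S3.add S4) (S5.mul_left (-2)),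
      ← Summable.tsum_add ((S3.add S4).add (S5.mul_left (-2))) (S1.mul_left (-1)),
      ← Summable.tsum_add (((S3.add S4).add (S5.mul_left (-2))).add (S1.mul_left (-1))) (S2.mul_left 7),
      ← Summable.tsum_add ((((S3.add S4).add (S5.mul_left (-2))).add (S1.mul_left (-1))).add
        (S2.mul_left 7)) (hq.mul_left 4)]
    exact tsum_congr fun p => by ring
  -- lower bound for the key sum
  have lower : 2 * (∑' p : Nat.Primes, q p) - (C3 + C4 + 2 * C5 + C1 + 7 * C2) ≤
      ∑' p : Nat.Primes, ((b p ^ 2 - a p ^ 2) ^ 2 + 4 * (b p ^ 2 - a p ^ 2)) * q p := by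
    rw [expand]
    have b1 := abs_le.mp e1
    have b2 := abs_le.mp e2
    have b3 := abs_le.mp e3
    have b4 := abs_le.mp e4
    have b5 := abs_le.mp e5
    linarith [b1.1, b1.2, b2.1, b2.2, b3.1, b3.2, b4.1, b4.2, b5.1, b5.2]
  -- upper bound for the key sum
  have upper : ∑' p : Nat.Primes,
      ((b p ^ 2 - a p ^ 2) ^ 2 + 4 * (b p ^ 2 - a p ^ 2)) * q p ≤
      32 * ∑' p : {p : Nat.Primes // a p ^ 2 < b p ^ 2}, q p.1 := by
    have hsub : ∑' p : {p : Nat.Primes // a p ^ 2 < b p ^ 2}, (32 : ℝ) * q p.1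
        = ∑' p : Nat.Primes, Set.indicator {p | a p ^ 2 < b p ^ 2} (fun p => 32 * q p) p := by
      exact tsum_subtype {p : Nat.Primes | a p ^ 2 < b p ^ 2} (fun p => 32 * q p)
    calc ∑' p : Nat.Primes, ((b p ^ 2 - a p ^ 2) ^ 2 + 4 * (b p ^ 2 - a p ^ 2)) * q p
        ≤ ∑' p : Nat.Primes, Set.indicator {p | a p ^ 2 < b p ^ 2} (fun p => 32 * q p) p := by
          refine Summable.tsum_le_tsum (fun p => ?_) SC ((hq.mul_left 32).indicator _)
          by_cases hp : a p ^ 2 < b p ^ 2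
          · rw [Set.indicator_of_mem (show p ∈ {p : Nat.Primes | a p ^ 2 < b p ^ 2} from hp)]
            refine mul_le_mul_of_nonneg_right ?_ (hq0 p)
            nlinarith [mul_nonneg (sub_nonneg.mpr hp.le)
              (by linarith [hb4 p, ha0 p] : (0:ℝ) ≤ 4 - (b p ^ 2 - a p ^ 2)),
              hb4 p, ha0 p]
          · rw [Set.indicator_of_notMem (show p ∉ {p : Nat.Primes | a p ^ 2 < b p ^ 2} from hp)]
            push_neg at hp
            have hcc : (b p ^ 2 - a p ^ 2) ^ 2 + 4 * (b p ^ 2 - a p ^ 2) ≤ 0 := by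
              nlinarith [mul_nonneg (by linarith : (0:ℝ) ≤ a p ^ 2 - b p ^ 2)
                (by linarith [ha4 p, hb0 p] : (0:ℝ) ≤ b p ^ 2 - a p ^ 2 + 4)]
            exact mul_nonpos_of_nonpos_of_nonneg hcc (hq0 p)
      _ = ∑' p : {p : Nat.Primes // a p ^ 2 < b p ^ 2}, (32 : ℝ) * q p.1 := hsub.symm
      _ = 32 * ∑' p : {p : Nat.Primes // a p ^ 2 < b p ^ 2}, q p.1 := tsum_mul_left
  linarith
lemma aux_summable_rpow {s : ℝ} (hs : 1 < s) :
    Summable (fun p : Nat.Primes => ((p : ℕ) : ℝ) ^ (-s)) :=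
  Nat.Primes.summable_rpow.mpr (by linarith)

lemma aux_wsummable {s : ℝ} (hs : 1 < s) {w : Nat.Primes → ℝ} {C : ℝ}
    (hw : ∀ p, |w p| ≤ C) :
    Summable (fun p : Nat.Primes => w p * ((p : ℕ) : ℝ) ^ (-s)) := by
  apply Summable.of_abs
  apply Summable.of_nonneg_of_le (fun p => abs_nonneg _) _ ((aux_summable_rpow hs).mul_left C)
  intro p
  have h0 : (0:ℝ) ≤ ((p : ℕ) : ℝ) ^ (-s) := Real.rpow_nonneg (by positivity) _
  rw [abs_mul, abs_of_nonneg h0]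
  exact mul_le_mul_of_nonneg_right (hw p) h0

lemma aux_S_tendsto :
    Tendsto (fun s : ℝ => ∑' p : Nat.Primes, ((p : ℕ) : ℝ) ^ (-s)) (𝓝[>] (1:ℝ)) atTop := by
  rw [tendsto_atTop]
  intro M
  obtain ⟨F, hF⟩ : ∃ F : Finset Nat.Primes, M + 1 < ∑ p ∈ F, ((p : ℕ) : ℝ)⁻¹ := by
    by_contra h
    push_neg at h
    refine Nat.Primes.not_summable_one_div ?_
    simpa [one_div] using
      summable_of_sum_le (c := M + 1) (fun p => by positivity) h
  have hcont : ContinuousAt (fun s : ℝ => ∑ p ∈ F, ((p : ℕ) : ℝ) ^ (-s)) 1 := by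
    apply tendsto_finset_sum
    intro p _
    have hp : ((p : ℕ) : ℝ) ≠ 0 := by
      have := p.2.two_le
      positivity
    exact ContinuousAt.comp (Real.continuousAt_const_rpow hp) (continuousAt_neg)
  have hval : M < ∑ p ∈ F, ((p : ℕ) : ℝ) ^ (-(1:ℝ)) := by
    have : ∑ p ∈ F, ((p : ℕ) : ℝ) ^ (-(1:ℝ)) = ∑ p ∈ F, ((p : ℕ) : ℝ)⁻¹ := by
      refine Finset.sum_congr rfl fun p _ => ?_
      rw [Real.rpow_neg_one]
    rw [this]; linarith
  have hev : ∀ᶠ s in 𝓝 (1:ℝ), M < ∑ p ∈ F, ((p : ℕ) : ℝ) ^ (-s) :=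
    hcont.eventually_const_lt hval
  filter_upwards [nhdsWithin_le_nhds hev, self_mem_nhdsWithin] with s hMs (hs : 1 < s)
  refine le_trans hMs.le ?_
  exact Summable.sum_le_tsum F (fun p _ => Real.rpow_nonneg (by positivity) _) (aux_summable_rpow hs)

/-- Theorem 2 of the paper, axiomatized form: If `|a p| ≤ 2`, `|b p| ≤ 2`
for all primes `p`, and as `s → 1⁺` the sums `Σ_p (a_p² - 1) p^{-s}`,
`Σ_p (b_p² - 1) p^{-s}`, `Σ_p (a_p⁴ - 3 a_p² + 1) p^{-s}`, `Σ_p (b_p⁴ - 3 b_p² + 1) p^{-s}`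
and `Σ_p a_p² b_p² p^{-s} - Σ_p p^{-s}` are all `O(1)`, then the set `{p : a_p² < b_p²}`
has analytic density at least `1/16`. -/
theorem statement7 (a b : Nat.Primes → ℝ)
    (ha : ∀ p : Nat.Primes, |a p| ≤ 2) (hb : ∀ p : Nat.Primes, |b p| ≤ 2)
    (h1 : (fun s : ℝ => ∑' p : Nat.Primes, (a p ^ 2 - 1) * ((p : ℕ) : ℝ) ^ (-s))
      =O[𝓝[>] (1 : ℝ)] (fun _ => (1 : ℝ)))
    (h2 : (fun s : ℝ => ∑' p : Nat.Primes, (b p ^ 2 - 1) * ((p : ℕ) : ℝ) ^ (-s))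
      =O[𝓝[>] (1 : ℝ)] (fun _ => (1 : ℝ)))
    (h3 : (fun s : ℝ =>
        ∑' p : Nat.Primes, (a p ^ 4 - 3 * a p ^ 2 + 1) * ((p : ℕ) : ℝ) ^ (-s))
      =O[𝓝[>] (1 : ℝ)] (fun _ => (1 : ℝ)))
    (h4 : (fun s : ℝ =>
        ∑' p : Nat.Primes, (b p ^ 4 - 3 * b p ^ 2 + 1) * ((p : ℕ) : ℝ) ^ (-s))
      =O[𝓝[>] (1 : ℝ)] (fun _ => (1 : ℝ)))
    (h5 : (fun s : ℝ => (∑' p : Nat.Primes, a p ^ 2 * b p ^ 2 * ((p : ℕ) : ℝ) ^ (-s))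
        - ∑' p : Nat.Primes, ((p : ℕ) : ℝ) ^ (-s))
      =O[𝓝[>] (1 : ℝ)] (fun _ => (1 : ℝ))) :
    (1 : ℝ) / 16 ≤ liminf (fun s : ℝ =>
      (∑' p : {p : Nat.Primes // a p ^ 2 < b p ^ 2}, ((p.1 : ℕ) : ℝ) ^ (-s)) /
        ∑' p : Nat.Primes, ((p : ℕ) : ℝ) ^ (-s)) (𝓝[>] (1 : ℝ)) := by
  have ha4 : ∀ p, a p ^ 2 ≤ 4 := fun p => by
    have := abs_le.mp (ha p); nlinarith [this.1, this.2]
  have hb4 : ∀ p, b p ^ 2 ≤ 4 := fun p => by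
    have := abs_le.mp (hb p); nlinarith [this.1, this.2]
  rw [isBigO_iff] at h1 h2 h3 h4 h5
  obtain ⟨C1, hC1⟩ := h1
  obtain ⟨C2, hC2⟩ := h2
  obtain ⟨C3, hC3⟩ := h3
  obtain ⟨C4, hC4⟩ := h4
  obtain ⟨C5, hC5⟩ := h5
  simp only [norm_one, mul_one, Real.norm_eq_abs] at hC1 hC2 hC3 hC4 hC5
  set K : ℝ := C3 + C4 + 2 * C5 + C1 + 7 * C2 with hK
  -- notation
  set S : ℝ → ℝ := fun s => ∑' p : Nat.Primes, ((p : ℕ) : ℝ) ^ (-s) with hSdef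
  set A : ℝ → ℝ :=
    fun s => ∑' p : {p : Nat.Primes // a p ^ 2 < b p ^ 2}, ((p.1 : ℕ) : ℝ) ^ (-s) with hAdef
  have hq0 : ∀ (s : ℝ) (p : Nat.Primes), (0:ℝ) ≤ ((p : ℕ) : ℝ) ^ (-s) :=
    fun s p => Real.rpow_nonneg (by positivity) _
  have key : ∀ᶠ s in 𝓝[>] (1:ℝ), 2 * S s - K ≤ 32 * A s := by
    filter_upwards [hC1, hC2, hC3, hC4, hC5, self_mem_nhdsWithin] with s e1 e2 e3 e4 e5 hs
    exact aux_key a b (fun p => ((p : ℕ) : ℝ) ^ (-s)) (hq0 s) (aux_summable_rpow hs)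
      ha4 hb4 e1 e2 e3 e4 e5
  have hSt : Tendsto S (𝓝[>] (1:ℝ)) atTop := aux_S_tendsto
  have hpos : ∀ᶠ s in 𝓝[>] (1:ℝ), 1 ≤ S s := hSt.eventually_ge_atTop 1
  have hfg : ∀ᶠ s in 𝓝[>] (1:ℝ), 1 / 16 - K / 32 / S s ≤ A s / S s := by
    filter_upwards [key, hpos] with s hk h1s
    have hS0 : (0:ℝ) < S s := by linarith
    have heq : 1 / 16 - K / 32 / S s = (2 * S s - K) / 32 / S s := by
      field_simp
      ring
    rw [heq]
    gcongr
    linarith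
  have hUB : ∀ᶠ s in 𝓝[>] (1:ℝ), A s / S s ≤ 1 := by
    filter_upwards [hpos, self_mem_nhdsWithin] with s h1s hs
    have hS0 : (0:ℝ) < S s := by linarith
    rw [div_le_one hS0]
    have hAs : A s = ∑' p : Nat.Primes,
        Set.indicator {p | a p ^ 2 < b p ^ 2} (fun p => ((p : ℕ) : ℝ) ^ (-s)) p := by
      exact tsum_subtype {p : Nat.Primes | a p ^ 2 < b p ^ 2}
        (fun p => ((p : ℕ) : ℝ) ^ (-s))
    rw [hAs]
    refine Summable.tsum_le_tsum (fun p => Set.indicator_le_self' (fun p _ => hq0 s p) p)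
      ((aux_summable_rpow hs).indicator _) (aux_summable_rpow hs)
  have hlim : Tendsto (fun s => 1 / 16 - K / 32 / S s) (𝓝[>] (1:ℝ)) (𝓝 (1 / 16)) := by
    have h0 : Tendsto (fun s => K / 32 / S s) (𝓝[>] (1:ℝ)) (𝓝 0) :=
      Tendsto.div_atTop tendsto_const_nhds hSt
    simpa using (tendsto_const_nhds (x := (1:ℝ)/16)).sub h0
  calc (1:ℝ) / 16 = liminf (fun s => 1 / 16 - K / 32 / S s) (𝓝[>] (1:ℝ)) :=
        hlim.liminf_eq.symm
    _ ≤ liminf (fun s => A s / S s) (𝓝[>] (1:ℝ)) :=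
        liminf_le_liminf hfg hlim.isBoundedUnder_ge
          (isCoboundedUnder_ge_of_eventually_le _ hUB)
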